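/- Let G be a looped simple graph with adjacency matrix M over 𝔽₂. Then for every subset A ⊆ V(G), the width of the twist D(G)*A satisfies w(D(G)*A) = rank(M[A]) + rank(M[Aᶜ]) (ranks over 𝔽₂, with Aᶜ = V(G)∖A). Consequently, the twist polynomial of G satisfies T_G(z) = Σ_{A ⊆ V(G)} z^{rank(M[A]) + rank(M[Aᶜ])}. -/

import Mathlib

open Matrix Polynomial

/-- The principal submatrix of `M` with rows and columns indexed by the finite set `S`;
by convention the determinant of the empty principal submatrix is `1`, so it is nonsingular. -/
def psub {R V : Type*} (M : Matrix V V R) (S : Finset V) : Matrix ↥S ↥S R :=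
  M.submatrix Subtype.val Subtype.val

/-- The width of a set system on a finite ground set, given by the predicate `P` describing
its feasible sets: the maximum cardinality of a feasible set minus the minimum cardinality. -/
noncomputable def sysWidth {V : Type*} (P : Finset V → Prop) : ℕ :=
  sSup {k | ∃ S, P S ∧ S.card = k} - sInf {k | ∃ S, P S ∧ S.card = k}

/-- The width of the twist `D(M) * A`, where `D(M)` is the delta-matroid of the
symmetric matrix `M` (feasible sets = index sets of nonsingular principal submatrices):
a set `S` is feasible in `D(M) * A` iff `S ∆ A` is feasible in `D(M)`. -/
noncomputable def twistWidth {R V : Type*} [CommRing R] [DecidableEq V]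
    (M : Matrix V V R) (A : Finset V) : ℕ :=
  sysWidth fun S => (psub M (symmDiff S A)).det ≠ 0

/-- The twist polynomial of the looped simple graph with adjacency matrix `M` over `𝔽₂`:
`T_G(z) = Σ_{A ⊆ V(G)} z^{w(D(G)*A)}`. -/
noncomputable def twistPoly {R V : Type*} [CommRing R] [Fintype V] [DecidableEq V]
    (M : Matrix V V R) : Polynomial ℤ :=
  ∑ A : Finset V, (X : Polynomial ℤ) ^ twistWidth M A

section Aux

open Module Submodule Set

set_option linter.unusedSectionVars false

variable {K : Type*} [Field K]

section RankLemmas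

variable {α β γ : Type*} [Fintype α] [Fintype β] [Fintype γ]

private lemma rank_submatrix_rows_le' (N : Matrix β γ K) (f : α → β) :
    (N.submatrix f id).rank ≤ N.rank := by
  rw [Matrix.rank_eq_finrank_span_row, Matrix.rank_eq_finrank_span_row]
  apply Submodule.finrank_mono
  apply Submodule.span_mono
  rintro - ⟨i, rfl⟩
  exact ⟨f i, rfl⟩

private lemma rank_submatrix_cols_le' (N : Matrix γ β K) (f : α → β) :
    (N.submatrix id f).rank ≤ N.rank := by
  rw [← Matrix.rank_transpose N, ← Matrix.rank_transpose (N.submatrix id f),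
    Matrix.transpose_submatrix]
  exact rank_submatrix_rows_le' Nᵀ f

private lemma rank_le_submatrix_rows_add [DecidableEq β] (N : Matrix β γ K) (f : α → β)
    (hf : Function.Injective f) :
    N.rank ≤ (N.submatrix f id).rank + (Fintype.card β - Fintype.card α) := by
  classical
  have h1 : Matrix.rank N = finrank K (span K (Set.range N)) := Matrix.rank_eq_finrank_span_row N
  have hsplit : Set.range N = N '' (Set.range f) ∪ N '' (Set.range f)ᶜ :=
    Set.image_univ.symm.trans ((congrArg (N '' ·) (Set.union_compl_self _)).symm.trans
      (Set.image_union _ _ _))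
  have h2 : span K (Set.range N) = span K (N '' Set.range f) ⊔ span K (N '' (Set.range f)ᶜ) := by
    rw [hsplit, Submodule.span_union]
  have himg2 : N '' Set.range f = Set.range (N.submatrix f id) := by
    exact (Set.range_comp _ _).symm
  have h3 : finrank K (span K (N '' Set.range f)) = (N.submatrix f id).rank := by
    rw [Matrix.rank_eq_finrank_span_row, himg2]; rfl
  have h4 : finrank K (span K (N '' (Set.range f)ᶜ))
      ≤ Fintype.card β - Fintype.card α := by
    have := Matrix.rank_le_card_height (N.submatrix ((↑) : ((Set.range f)ᶜ : Set β) → β) id)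
    rw [Matrix.rank_eq_finrank_span_row] at this
    have himg : N '' (Set.range f)ᶜ
        = Set.range (N.submatrix ((↑) : ((Set.range f)ᶜ : Set β) → β) id) := by
      exact (Set.image_eq_range _ _).trans rfl
    rw [himg]
    refine this.trans ?_
    rw [Fintype.card_compl_set]
    simp [Set.card_range_of_injective hf]
  calc N.rank = finrank K (span K (Set.range N)) := h1
    _ ≤ finrank K (span K (N '' Set.range f)) + finrank K (span K (N '' (Set.range f)ᶜ)) := by
        rw [h2]
        have := Submodule.finrank_sup_add_finrank_inf_eq
          (span K (N '' Set.range f)) (span K (N '' (Set.range f)ᶜ))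
        omega
    _ ≤ _ := by rw [h3]; omega

private lemma rank_le_submatrix_cols_add [DecidableEq β] (N : Matrix γ β K) (f : α → β)
    (hf : Function.Injective f) :
    N.rank ≤ (N.submatrix id f).rank + (Fintype.card β - Fintype.card α) := by
  have := rank_le_submatrix_rows_add Nᵀ f hf
  rwa [Matrix.rank_transpose, ← Matrix.transpose_submatrix, Matrix.rank_transpose] at this

private lemma rank_le_submatrix_add' [DecidableEq β] (N : Matrix β β K) (f : α → β)
    (hf : Function.Injective f) :
    N.rank ≤ (N.submatrix f f).rank + 2 * (Fintype.card β - Fintype.card α) := by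
  have h1 := rank_le_submatrix_rows_add N f hf
  have h2 := rank_le_submatrix_cols_add (N.submatrix f id) f hf
  have h3 : (N.submatrix f id).submatrix id f = N.submatrix f f := rfl
  rw [h3] at h2
  omega

end RankLemmas

private lemma exists_principal' {W : Type*} [Fintype W] [DecidableEq W] (N : Matrix W W K)
    (hN : N.IsSymm) :
    ∃ S : Finset W, (psub N S).det ≠ 0 ∧ S.card = N.rank := by
  classical
  obtain ⟨I, hLI, hmax⟩ := exists_maximal_linearIndepOn K (fun i => N i)
  set S : Finset W := (Set.toFinite I).toFinset with hS
  have hSI : (S : Set W) = I := Set.Finite.coe_toFinset _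
  have hspan : ∀ k, N k ∈ span K (N '' I) := by
    intro k
    by_cases hk : k ∈ I
    · exact subset_span (Set.mem_image_of_mem _ hk)
    · obtain ⟨a, ha0, hmem⟩ := hmax k hk
      have := Submodule.smul_mem (span K (N '' I)) a⁻¹ hmem
      rwa [smul_smul, inv_mul_cancel₀ ha0, one_smul] at this
  have hIrange : N '' I = Set.range (fun x : ↥S => N x.val) := by
    refine (congrArg (N '' ·) hSI.symm).trans ((Set.image_eq_range _ _).trans ?_)
    rfl
  have hLI' : LinearIndependent K (fun x : ↥S => N x.val) := by
    have hinj : Function.Injective (fun x : ↥S => (⟨x.1, by rw [← hSI]; exact x.2⟩ : ↥I)) := by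
      intro a b hab
      exact Subtype.ext (by simpa using congrArg Subtype.val hab)
    exact hLI.comp _ hinj
  refine ⟨S, ?_, ?_⟩
  · rw [← isUnit_iff_ne_zero, ← Matrix.isUnit_iff_isUnit_det,
      ← Matrix.linearIndependent_rows_iff_isUnit, Fintype.linearIndependent_iff]
    intro g hg i
    set y : W → K := ∑ i : ↥S, g i • N i.val with hy
    have hyS : ∀ j (hj : j ∈ S), y j = 0 := by
      intro j hj
      have := congrFun hg ⟨j, hj⟩
      simpa [y, Finset.sum_apply, psub] using this
    have hy0 : ∀ k, y k = 0 := by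
      intro k
      have hk := hspan k
      rw [hIrange, mem_span_range_iff_exists_fun] at hk
      obtain ⟨e, he⟩ := hk
      have hyk : y k = ∑ i : ↥S, g i * N k i.val := by
        simp only [y, Finset.sum_apply, Pi.smul_apply, smul_eq_mul]
        refine Finset.sum_congr rfl fun i _ => ?_
        rw [← hN.apply]
      rw [hyk]
      have hrow : ∀ i : ↥S, N k i.val = ∑ j : ↥S, e j * N j.val i.val := by
        intro i
        have := congrFun he i.val
        simpa [Finset.sum_apply] using this.symm
      calc ∑ i : ↥S, g i * N k i.val
          = ∑ i : ↥S, g i * ∑ j : ↥S, e j * N j.val i.val := by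
            refine Finset.sum_congr rfl fun i _ => by rw [hrow]
        _ = ∑ j : ↥S, e j * ∑ i : ↥S, g i * N i.val j.val := by
            simp_rw [Finset.mul_sum]
            rw [Finset.sum_comm]
            refine Finset.sum_congr rfl fun j _ => Finset.sum_congr rfl fun i _ => ?_
            rw [hN.apply i.val j.val]
            ring
        _ = ∑ j : ↥S, e j * y j.val := by
            refine Finset.sum_congr rfl fun j _ => ?_
            congr 1
            simp [y, Finset.sum_apply]
        _ = 0 := by
            refine Finset.sum_eq_zero fun j _ => ?_
            rw [hyS j.val j.2, mul_zero]
    have : y = 0 := funext hy0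
    rw [hy] at this
    exact Fintype.linearIndependent_iff.mp hLI' g this i
  · have hsp1 : span K (Set.range N) = span K (N '' I) := by
      apply le_antisymm
      · rw [Submodule.span_le]
        rintro - ⟨k, rfl⟩
        exact hspan k
      · exact Submodule.span_mono (Set.image_subset_range _ _)
    rw [Matrix.rank_eq_finrank_span_row, Matrix.row, hsp1, hIrange, finrank_span_eq_card hLI',
      Fintype.card_coe]

variable {V : Type*} [Fintype V] [DecidableEq V]

private lemma psub_rank_mono (M : Matrix V V K) {s t : Finset V} (h : s ⊆ t) :
    (psub M s).rank ≤ (psub M t).rank := by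
  let f : ↥s → ↥t := fun x => ⟨x.1, h x.2⟩
  have he : psub M s = ((psub M t).submatrix f id).submatrix id f := rfl
  rw [he]
  exact (rank_submatrix_cols_le' _ f).trans (rank_submatrix_rows_le' _ f)

private lemma psub_rank_drop (M : Matrix V V K) {s t : Finset V} (h : s ⊆ t) :
    (psub M t).rank ≤ (psub M s).rank + 2 * (t.card - s.card) := by
  let f : ↥s → ↥t := fun x => ⟨x.1, h x.2⟩
  have hf : Function.Injective f := by
    intro a b hab
    exact Subtype.ext (by simpa [f] using congrArg Subtype.val hab)
  have he : psub M s = (psub M t).submatrix f f := rfl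
  have := rank_le_submatrix_add' (psub M t) f hf
  rwa [← he, Fintype.card_coe, Fintype.card_coe] at this

private lemma psub_rank_le_card (M : Matrix V V K) (s : Finset V) : (psub M s).rank ≤ s.card := by
  have := Matrix.rank_le_card_width (psub M s)
  rwa [Fintype.card_coe] at this

private lemma psub_rank_full (M : Matrix V V K) {s : Finset V} (h : (psub M s).det ≠ 0) :
    (psub M s).rank = s.card := by
  rw [Matrix.rank_of_isUnit _ ((Matrix.isUnit_iff_isUnit_det _).mpr (isUnit_iff_ne_zero.mpr h)),
    Fintype.card_coe]

private lemma key_ineq (M : Matrix V V K) {F : Finset V} (hF : (psub M F).det ≠ 0)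
    (B : Finset V) : (F ∩ B).card ≤ (psub M B).rank + (F \ B).card := by
  have h1 := psub_rank_full M hF
  have h2 := psub_rank_drop M (Finset.inter_subset_left (s₁ := F) (s₂ := B))
  have h3 := psub_rank_mono M (Finset.inter_subset_right (s₁ := F) (s₂ := B))
  have h4 : (F ∩ B).card + (F \ B).card = F.card := Finset.card_inter_add_card_sdiff F B
  omega

private lemma exists_principal_psub (M : Matrix V V K) (hM : M.IsSymm) (A : Finset V) :
    ∃ F : Finset V, F ⊆ A ∧ (psub M F).det ≠ 0 ∧ F.card = (psub M A).rank := by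
  obtain ⟨S, hdet, hcard⟩ := exists_principal' (psub M A) (hM.submatrix _)
  refine ⟨S.map ⟨Subtype.val, Subtype.val_injective⟩, ?_, ?_, ?_⟩
  · intro x hx
    obtain ⟨y, _, rfl⟩ := Finset.mem_map.mp hx
    exact y.2
  · set F := S.map ⟨Subtype.val, Subtype.val_injective⟩ with hFdef
    have hFA : ∀ x ∈ F, x ∈ A := by
      intro x hx
      obtain ⟨y, _, rfl⟩ := Finset.mem_map.mp hx
      exact y.2
    let e : ↥S ≃ ↥F :=
      { toFun := fun x => ⟨x.1.1, Finset.mem_map_of_mem _ x.2⟩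
        invFun := fun y => ⟨⟨y.1, hFA y.1 y.2⟩, by
          obtain ⟨x, hx, hxy⟩ := Finset.mem_map.mp y.2
          have : x = ⟨y.1, hFA y.1 y.2⟩ := Subtype.ext hxy
          exact this ▸ hx⟩
        left_inv := fun x => Subtype.ext (Subtype.ext rfl)
        right_inv := fun y => Subtype.ext rfl }
    have hmat : psub (psub M A) S = (psub M F).submatrix e e := rfl
    have : (psub (psub M A) S).det = (psub M F).det := by
      rw [hmat, Matrix.det_submatrix_equiv_self]
    rwa [this] at hdet
  · rw [Finset.card_map, hcard]

private lemma card_symmDiff (F A : Finset V) :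
    (symmDiff F A).card = (F \ A).card + (A \ F).card := by
  rw [symmDiff_def, Finset.sup_eq_union,
    Finset.card_union_of_disjoint disjoint_sdiff_sdiff]

private lemma twistWidth_eq (M : Matrix V V K) (hM : M.IsSymm) (A : Finset V) :
    twistWidth M A = (psub M A).rank + (psub M Aᶜ).rank := by
  classical
  set rA := (psub M A).rank with hrA
  set rC := (psub M Aᶜ).rank with hrC
  set KS : Set ℕ := {k | ∃ S : Finset V, (psub M (symmDiff S A)).det ≠ 0 ∧ S.card = k} with hKS
  have hFk : ∀ k ∈ KS, ∃ F : Finset V, (psub M F).det ≠ 0 ∧ (symmDiff F A).card = k := by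
    rintro k ⟨S, hdet, rfl⟩
    exact ⟨symmDiff S A, hdet, by rw [symmDiff_symmDiff_cancel_right]⟩
  have hub : ∀ k ∈ KS, k ≤ A.card + rC := by
    intro k hk
    obtain ⟨F, hdet, rfl⟩ := hFk k hk
    have h1 := key_ineq M hdet Aᶜ
    have c1 := card_symmDiff F A
    have c2 : F \ A = F ∩ Aᶜ := by rw [_root_.sdiff_eq, Finset.inf_eq_inter]
    have c3 : F \ Aᶜ = F ∩ A := by rw [_root_.sdiff_compl, Finset.inf_eq_inter]
    have c4 : (A ∩ F).card + (A \ F).card = A.card := Finset.card_inter_add_card_sdiff A F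
    rw [← c2, c3] at h1
    rw [Finset.inter_comm A F] at c4
    omega
  have hlb : ∀ k ∈ KS, A.card ≤ rA + k := by
    intro k hk
    obtain ⟨F, hdet, rfl⟩ := hFk k hk
    have h1 := key_ineq M hdet A
    have c1 := card_symmDiff F A
    have c4 : (A ∩ F).card + (A \ F).card = A.card := Finset.card_inter_add_card_sdiff A F
    rw [Finset.inter_comm A F] at c4
    omega
  have hmax_mem : A.card + rC ∈ KS := by
    obtain ⟨F, hFA, hdet, hcard⟩ := exists_principal_psub M hM Aᶜ
    have hdisj : Disjoint F A := by
      rw [Finset.disjoint_left]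
      intro a ha hA
      exact (Finset.mem_compl.mp (hFA ha)) hA
    refine ⟨symmDiff F A, by rwa [symmDiff_symmDiff_cancel_right], ?_⟩
    rw [hdisj.symmDiff_eq_sup, Finset.sup_eq_union, Finset.card_union_of_disjoint hdisj,
      hcard, Nat.add_comm]
  have hmin_mem : A.card - rA ∈ KS := by
    obtain ⟨F, hFA, hdet, hcard⟩ := exists_principal_psub M hM A
    refine ⟨symmDiff F A, by rwa [symmDiff_symmDiff_cancel_right], ?_⟩
    rw [symmDiff_of_le (Finset.le_iff_subset.mpr hFA), Finset.card_sdiff_of_subset hFA, hcard]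
  have hsup : sSup KS = A.card + rC := IsGreatest.csSup_eq ⟨hmax_mem, hub⟩
  have hinf : sInf KS = A.card - rA :=
    IsLeast.csInf_eq ⟨hmin_mem, fun k hk => by have := hlb k hk; omega⟩
  have hrank_le : rA ≤ A.card := psub_rank_le_card M A
  have : twistWidth M A = sSup KS - sInf KS := rfl
  rw [this, hsup, hinf]
  omega

end Aux


/-- Proposition 3.3: for a looped simple graph `G` with adjacency matrix `M` over `𝔽₂`,
`w(D(G)*A) = rank M[A] + rank M[Aᶜ]` for every `A ⊆ V(G)`, and consequently
`T_G(z) = Σ_{A ⊆ V(G)} z^{rank M[A] + rank M[Aᶜ]}`. -/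
theorem twistPoly_eq_sum_rank
    {V : Type*} [Fintype V] [DecidableEq V]
    (M : Matrix V V (ZMod 2)) (hM : M.IsSymm) :
    (∀ A : Finset V, twistWidth M A = (psub M A).rank + (psub M Aᶜ).rank)
    ∧ twistPoly M
        = ∑ A : Finset V, (X : Polynomial ℤ) ^ ((psub M A).rank + (psub M Aᶜ).rank) := by
  refine ⟨fun A => twistWidth_eq M hM A, ?_⟩
  unfold twistPoly
  exact Finset.sum_congr rfl fun A _ => by rw [twistWidth_eq M hM A]
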